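/- Let h : ℕ^r → ℕ^s be an integral homomorphism of free commutative monoids, with canonical bases (e_i) of ℕ^r and (f_j) of ℕ^s. Then no basis element f_j divides both h(e_{i₁}) and h(e_{i₂}) for distinct indices i₁ ≠ i₂; equivalently, the supports of the elements h(e_i) ∈ ℕ^s (viewed as functions on the index set of the f_j) are pairwise disjoint. -/
import Mathlib


/-- A homomorphism of commutative monoids (written additively) is integral. -/
def IsIntegralHom {M N : Type*} [AddCommMonoid M] [AddCommMonoid N] (h : M →+ N) : Prop :=
  ∀ a₁ a₂ : M, ∀ b₁ b₂ : N, h a₁ + b₁ = h a₂ + b₂ →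
    ∃ a₃ a₄ : M, ∃ b : N, b₁ = h a₃ + b ∧ b₂ = h a₄ + b ∧ a₁ + a₃ = a₂ + a₄

/-- The supports of the images of distinct basis elements under an integral
homomorphism `ℕ^r → ℕ^s` are pairwise disjoint: no `f_j` divides both
`h (e i₁)` and `h (e i₂)`. -/
theorem stmt1 (r s : ℕ) (h : (Fin r → ℕ) →+ (Fin s → ℕ)) (hint : IsIntegralHom h) :
    ∀ i₁ i₂ : Fin r, i₁ ≠ i₂ → ∀ j : Fin s,
      h (Pi.single i₁ 1) j = 0 ∨ h (Pi.single i₂ 1) j = 0 := by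
  intro i₁ i₂ hne j
  by_contra hc
  push_neg at hc
  obtain ⟨hu, hv⟩ := hc
  set e₁ : Fin r → ℕ := Pi.single i₁ 1 with he₁
  set e₂ : Fin r → ℕ := Pi.single i₂ 1 with he₂
  set u := h e₁ with hu'
  set v := h e₂ with hv'
  have hu1 : 1 ≤ u j := Nat.one_le_iff_ne_zero.mpr hu
  have hv1 : 1 ≤ v j := Nat.one_le_iff_ne_zero.mpr hv
  set b₁ : Fin s → ℕ := fun k => v k - (Pi.single j 1 : Fin s → ℕ) k with hb₁
  set b₂ : Fin s → ℕ := fun k => u k - (Pi.single j 1 : Fin s → ℕ) k with hb₂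
  have key : h e₁ + b₁ = h e₂ + b₂ := by
    funext k
    by_cases hk : k = j
    · subst hk
      simp only [Pi.add_apply, hb₁, hb₂, Pi.single_eq_same, ← hu', ← hv']
      omega
    · simp [hb₁, hb₂, Pi.single_eq_of_ne hk, ← hu', ← hv', Nat.add_comm]
  obtain ⟨a₃, a₄, b, h1, _h2, h3⟩ := hint e₁ e₂ b₁ b₂ key
  have ha₃ : 1 ≤ a₃ i₂ := by
    have := congrFun h3 i₂
    simp only [Pi.add_apply, he₁, he₂, Pi.single_eq_same,
      Pi.single_eq_of_ne (Ne.symm hne)] at this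
    omega
  set c : Fin r → ℕ := fun k => a₃ k - e₂ k with hcdef
  have ha₃' : a₃ = e₂ + c := by
    funext k
    by_cases hk : k = i₂
    · subst hk
      simp only [Pi.add_apply, hcdef, he₂, Pi.single_eq_same]
      omega
    · simp [hcdef, he₂, Pi.single_eq_of_ne hk]
  have : b₁ j = v j + h c j + b j := by
    have := congrFun h1 j
    rw [ha₃', map_add] at this
    simpa [← hv', add_assoc] using this
  simp only [hb₁, Pi.single_eq_same] at this
  omega
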